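/- Let E/F be a quadratic extension of p-adic fields with p odd, E = F(δ), δ² = Δ. For t ∈ E^1 with t ≡ 1 mod p_E, the element k_t (the unique representative 1 + ϖ_F δ b or 1 + δ b as in the unramified/ramified case) satisfies: the assignment t ↦ k_t is a section of the natural surjection 1 + p_E → (1 + p_E)/(1 + p_F) ≅ E^1 ∩ (1 + p_E), i.e. k_t/τ(k_t) = t for all such t, and k_1 = 1. -/

import Mathlib

/-- Let `E/F` be a quadratic extension of `p`-adic fields with `p` odd,
`E = F(δ)`, `δ² = Δ`, `O_E = O_F[δ]`, `τ(δ) = -δ`.  Write the representative set as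
`{1 + c δ x : x ∈ O_F}`, where `c = ϖ_F` (a uniformizer) and `Δ` is a unit in the unramified
case, and `c = 1` and `Δ` is a uniformizer in the ramified case.  Then `t ↦ k_t` is a section
of the surjection `1 + p_E → (1 + p_E)/(1 + p_F) ≅ E^1 ∩ (1 + p_E)`: every `t ∈ E^1` with
`t ≡ 1 mod p_E` equals `k/τ(k)` for a unique representative `k = 1 + c δ x`, and `k_1 = 1`
(the representative with ratio `1` is the one with `x = 0`). -/
theorem stmt_19 {p : ℕ} (hp : p.Prime) (hp2 : p ≠ 2)
    {F E : Type*} [Field F] [Field E] [Algebra F E]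
    (hdim : Module.finrank F E = 2)
    (OF : ValuationSubring F) (OE : ValuationSubring E)
    [IsDomain OF] [IsDiscreteValuationRing OF]
    (hpF : OF.valuation (p : F) < 1)
    (τ : E ≃ₐ[F] E) (δ : E) (Δ : OF)
    (hδ : δ ^ 2 = algebraMap F E (Δ : F)) (hτδ : τ δ = -δ)
    (hΔns : ¬ IsSquare ((Δ : F)))
    (hOE : ∀ z : E, z ∈ OE ↔ ∃ a b : OF,
      z = algebraMap F E (a : F) + algebraMap F E (b : F) * δ)
    (c : OF)
    (hcase : (IsUnit Δ ∧ Irreducible c) ∨ (Irreducible Δ ∧ c = 1)) :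
    (∀ t : E, t * τ t = 1 → OE.valuation (t - 1) < 1 →
      ∃! x : OF,
        (1 + algebraMap F E (c : F) * δ * algebraMap F E (x : F)) /
          τ (1 + algebraMap F E (c : F) * δ * algebraMap F E (x : F)) = t) ∧
    (∀ x : OF,
      (1 + algebraMap F E (c : F) * δ * algebraMap F E (x : F)) /
          τ (1 + algebraMap F E (c : F) * δ * algebraMap F E (x : F)) = 1 → x = 0) := by
  set ι := algebraMap F E with hιdef
  have hιinj : Function.Injective ι := (algebraMap F E).injective
  -- Δ ≠ 0, δ ≠ 0
  have hΔ0 : (Δ : F) ≠ 0 := by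
    intro h
    exact hΔns (h ▸ (⟨0, by ring⟩ : IsSquare (0 : F)))
  have hδ0 : δ ≠ 0 := by
    intro h
    apply hΔ0
    have : ι (Δ : F) = ι 0 := by rw [map_zero, ← hδ, h]; ring
    exact hιinj this
  -- δ is not in the image of F
  have hδF : ∀ f : F, δ ≠ ι f := by
    intro f hf
    apply hΔns
    refine ⟨f, ?_⟩
    have : ι (Δ : F) = ι (f * f) := by
      rw [← hδ, hf, map_mul]; ring
    exact hιinj this
  -- linear independence of 1, δ
  have hindep : ∀ u v : F, ι u + ι v * δ = 0 → u = 0 ∧ v = 0 := by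
    intro u v huv
    by_cases hv : v = 0
    · subst hv
      simp only [map_zero, zero_mul, add_zero] at huv
      exact ⟨hιinj (by simpa using huv), rfl⟩
    · exfalso
      have hv' : ι v ≠ 0 := fun h => hv (hιinj (by simpa using h))
      apply hδF ((-u) / v)
      rw [map_div₀, map_neg, eq_div_iff hv']
      linear_combination huv
  have hindep' : ∀ u v u' v' : F, ι u + ι v * δ = ι u' + ι v' * δ → u = u' ∧ v = v' := by
    intro u v u' v' h
    have h0 : ι (u - u') + ι (v - v') * δ = 0 := by
      rw [map_sub, map_sub]; linear_combination h
    obtain ⟨h1, h2⟩ := hindep _ _ h0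
    constructor <;> [skip; skip] <;>
      [exact sub_eq_zero.mp h1; exact sub_eq_zero.mp h2]
  have hne : ∀ u v : F, u ≠ 0 → ι u + ι v * δ ≠ 0 := by
    intro u v hu h
    exact hu (hindep u v h).1
  -- membership facts
  have hOF_OE : ∀ u : OF, ι (u : F) ∈ OE := by
    intro u
    rw [hOE]
    exact ⟨u, 0, by simp⟩
  have hδOE : δ ∈ OE := by
    rw [hOE]
    exact ⟨0, 1, by simp⟩
  have hFOE : ∀ f : F, ι f ∈ OE → ∃ u : OF, f = (u : F) := by
    intro f hf
    obtain ⟨a, b, hab⟩ := (hOE _).mp hf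
    by_cases hb : (b : F) = 0
    · refine ⟨a, ?_⟩
      apply hιinj
      rw [hab, hb]; simp
    · exfalso
      have hb' : ι (b : F) ≠ 0 := fun h => hb (hιinj (by simpa using h))
      apply hδF ((f - (a : F)) / (b : F))
      rw [map_div₀, map_sub, eq_div_iff hb']
      linear_combination -hab
  -- unit iff valuation one
  have hval_le : ∀ u : OF, OE.valuation (ι (u : F)) ≤ 1 :=
    fun u => (OE.valuation_le_one_iff _).mpr (hOF_OE u)
  have hunit_val : ∀ u : OF, IsUnit u → OE.valuation (ι (u : F)) = 1 := by
    intro u hu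
    obtain ⟨w, hw⟩ := hu.exists_right_inv
    have hw' : (u : F) * (w : F) = 1 := by exact_mod_cast congrArg (fun z : OF => (z : F)) hw
    have hmul : OE.valuation (ι (u : F)) * OE.valuation (ι (w : F)) = 1 := by
      rw [← Valuation.map_mul, ← map_mul, hw', map_one, Valuation.map_one]
    refine le_antisymm (hval_le u) ?_
    calc (1 : OE.ValueGroup) = OE.valuation (ι (u : F)) * OE.valuation (ι (w : F)) := hmul.symm
      _ ≤ OE.valuation (ι (u : F)) * 1 := mul_le_mul_right (hval_le _) _
      _ = OE.valuation (ι (u : F)) := mul_one _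
  have hval_unit : ∀ u : OF, OE.valuation (ι (u : F)) = 1 → IsUnit u := by
    intro u hu
    have hu0 : (u : F) ≠ 0 := by
      intro h
      rw [h, map_zero, Valuation.map_zero] at hu
      exact zero_ne_one hu
    have hinv : ι ((u : F)⁻¹) ∈ OE := by
      rw [← OE.valuation_le_one_iff, map_inv₀, map_inv₀, hu, inv_one]
    obtain ⟨w, hw⟩ := hFOE _ hinv
    have : u * w = 1 := by
      have : ((u * w : OF) : F) = ((1 : OF) : F) := by
        push_cast
        rw [← hw]
        field_simp
      exact Subtype.coe_injective this
    exact IsUnit.of_mul_eq_one _ this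
  have hnonunit_val : ∀ u : OF, ¬ IsUnit u → OE.valuation (ι (u : F)) < 1 := by
    intro u hu
    rcases lt_or_eq_of_le (hval_le u) with h | h
    · exact h
    · exact absurd (hval_unit u h) hu
  -- 2 is a unit in OF
  have h2unit : IsUnit (2 : OF) := by
    by_contra h2
    have hpmem : ((p : ℕ) : OF) ∈ IsLocalRing.maximalIdeal OF := by
      rw [OF.valuation_lt_one_iff]
      have : (((p : ℕ) : OF) : F) = ((p : ℕ) : F) := by push_cast; ring
      rw [this]
      exact hpF
    have h2mem : (2 : OF) ∈ IsLocalRing.maximalIdeal OF :=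
      (IsLocalRing.mem_maximalIdeal _).mpr (mem_nonunits_iff.mpr h2)
    have hcop : IsCoprime ((2 : ℕ) : ℤ) ((p : ℕ) : ℤ) :=
      Nat.isCoprime_iff_coprime.mpr ((Nat.coprime_primes Nat.prime_two hp).mpr (fun h => hp2 h.symm))
    have hcop' : IsCoprime (2 : OF) ((p : ℕ) : OF) := by
      have := hcop.map (Int.castRingHom OF)
      simpa using this
    obtain ⟨s, r, hsr⟩ := hcop'
    have : (1 : OF) ∈ IsLocalRing.maximalIdeal OF := by
      rw [← hsr]
      exact Ideal.add_mem _ (Ideal.mul_mem_left _ _ h2mem) (Ideal.mul_mem_left _ _ hpmem)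
    exact (IsLocalRing.maximalIdeal.isMaximal OF).ne_top (Ideal.eq_top_of_isUnit_mem _ this isUnit_one)
  -- c ≠ 0
  have hc0 : (c : F) ≠ 0 := by
    rcases hcase with ⟨_, hcirr⟩ | ⟨_, hc1⟩
    · intro h
      exact hcirr.ne_zero (Subtype.coe_injective (by simpa using h))
    · rw [hc1]; simp
  -- conjugation formula
  have hτk : ∀ z : OF, τ (1 + ι (c : F) * δ * ι (z : F)) = 1 - ι (c : F) * δ * ι (z : F) := by
    intro z
    rw [map_add, map_one, map_mul, map_mul, τ.commutes, τ.commutes, hτδ]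
    ring
  have hτk0 : ∀ z : OF, (1 : E) - ι (c : F) * δ * ι (z : F) ≠ 0 := by
    intro z h
    apply hne 1 (-((c : F) * (z : F))) one_ne_zero
    rw [map_one, map_neg, map_mul]
    linear_combination h
  -- the main part
  have main : ∀ t : E, t * τ t = 1 → OE.valuation (t - 1) < 1 →
      ∃! x : OF,
        (1 + ι (c : F) * δ * ι (x : F)) /
          τ (1 + ι (c : F) * δ * ι (x : F)) = t := by
    intro t ht1 htv
    have htOE : t ∈ OE := by
      have h1 : t - 1 ∈ OE := (OE.valuation_le_one_iff _).mp (le_of_lt htv)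
      have := OE.add_mem _ _ h1 OE.one_mem
      simpa using this
    obtain ⟨a, b, ht⟩ := (hOE t).mp htOE
    have hτt : τ t = ι (a : F) - ι (b : F) * δ := by
      rw [ht, map_add, map_mul, τ.commutes, τ.commutes, hτδ]
      ring
    -- norm equation
    have habF : (a : F) ^ 2 - (b : F) ^ 2 * (Δ : F) = 1 := by
      apply hιinj
      rw [map_sub, map_one, map_mul, map_pow, map_pow]
      rw [hτt] at ht1
      rw [ht] at ht1
      linear_combination ht1 + (ι ((b : F)))^2 * hδ
    have hab : a ^ 2 - b ^ 2 * Δ = 1 := by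
      apply Subtype.coe_injective
      push_cast
      exact habF
    -- t - 1 in coordinates
    have ht1' : t - 1 = ι ((a : F) - 1) + ι (b : F) * δ := by
      rw [ht, map_sub, map_one]; ring
    -- key case analysis: b = c * b' and valuation of c·δ < 1
    have hkey : ∃ b' : OF, b = c * b' ∧ OE.valuation (ι (c : F) * δ) < 1 := by
      rcases hcase with ⟨hΔu, hcirr⟩ | ⟨hΔirr, hc1⟩
      · -- unramified case
        have hδle : OE.valuation δ ≤ 1 := (OE.valuation_le_one_iff _).mpr hδOE
        have hbnu : ¬ IsUnit b := by
          intro hbu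
          by_cases ha : IsUnit (a - 1)
          · -- the square-class argument
            obtain ⟨binv, hbbinv⟩ := hbu.exists_right_inv
            set u : OF := (a - 1) * binv with hudef
            have huu : IsUnit u := by
              apply IsUnit.mul ha
              exact IsUnit.of_mul_eq_one _ (mul_comm b binv ▸ hbbinv)
            -- e := (a-1)^2 - b^2 Δ is a nonunit
            have henu : ¬ IsUnit ((a - 1) ^ 2 - b ^ 2 * Δ) := by
              intro he
              have hconjOE : ι ((a : F) - 1) - ι (b : F) * δ ∈ OE := by
                rw [hOE]
                refine ⟨a - 1, -b, ?_⟩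
                push_cast
                simp only [map_sub, map_neg, map_one]
                ring
              have hval2 : OE.valuation (ι ((a : F) - 1) - ι (b : F) * δ) ≤ 1 :=
                (OE.valuation_le_one_iff _).mpr hconjOE
              have hprod : ι ((((a - 1) ^ 2 - b ^ 2 * Δ : OF)) : F)
                  = (t - 1) * (ι ((a : F) - 1) - ι (b : F) * δ) := by
                rw [ht1']
                push_cast
                simp only [map_sub, map_mul, map_pow, map_one]
                linear_combination (ι ((b : F)))^2 * hδ
              have : OE.valuation (ι ((((a - 1) ^ 2 - b ^ 2 * Δ : OF)) : F)) < 1 := by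
                rw [hprod, Valuation.map_mul]
                calc OE.valuation (t - 1) * OE.valuation (ι ((a : F) - 1) - ι (b : F) * δ)
                    ≤ OE.valuation (t - 1) * 1 := mul_le_mul_right hval2 _
                  _ = OE.valuation (t - 1) := mul_one _
                  _ < 1 := htv
              rw [hunit_val _ he] at this
              exact lt_irrefl _ this
            have hΔu2 : ¬ IsUnit (Δ - u ^ 2) := by
              intro h
              apply henu
              have heq : Δ - u ^ 2 = -(((a - 1) ^ 2 - b ^ 2 * Δ) * binv ^ 2) := by
                rw [hudef]
                linear_combination (-(Δ : OF) * (b * binv + 1)) * hbbinv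
              rw [heq] at h
              rw [IsUnit.neg_iff] at h
              exact isUnit_of_mul_isUnit_left h
            -- the valuation subring trick
            have claimA : ∀ w : OF, IsUnit w → ¬ IsUnit (Δ - w ^ 2) →
                (δ - ι (w : F)) / (δ + ι (w : F)) ∈ OE → False := by
              intro w hw hΔw hz
              have hden : δ + ι (w : F) ≠ 0 := by
                intro h
                apply hδF (-(w : F))
                rw [map_neg]
                linear_combination h
              obtain ⟨a₀, b₀, hz'⟩ := (hOE _).mp hz
              rw [div_eq_iff hden] at hz'
              have hz'' : ι (-(w : F)) + ι 1 * δ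
                  = ι ((a₀ : F) * (w : F) + (b₀ : F) * (Δ : F)) + ι ((a₀ : F) + (b₀ : F) * (w : F)) * δ := by
                rw [map_neg, map_one, map_add, map_mul, map_mul, map_add, map_mul]
                linear_combination hz' + ι ((b₀ : F)) * hδ
              obtain ⟨he1, he2⟩ := hindep' _ _ _ _ hz''
              have he1' : a₀ * w + b₀ * Δ = -w := by
                apply Subtype.coe_injective; push_cast; linear_combination -he1
              have he2' : a₀ + b₀ * w = 1 := by
                apply Subtype.coe_injective; push_cast; linear_combination -he2
              have hfin : b₀ * (Δ - w ^ 2) = -(2 * w) := by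
                linear_combination he1' - w * he2'
              have : IsUnit (b₀ * (Δ - w ^ 2)) := by
                rw [hfin]
                exact (h2unit.mul hw).neg
              exact hΔw (isUnit_of_mul_isUnit_right this)
            rcases OE.mem_or_inv_mem ((δ - ι (u : F)) / (δ + ι (u : F))) with hm | hm
            · exact claimA u huu hΔu2 hm
            · apply claimA (-u) huu.neg (by rwa [neg_pow, show ((-1:OF))^2 = 1 by ring, one_mul]  )
              have : ((δ - ι (u : F)) / (δ + ι (u : F)))⁻¹
                  = (δ - ι ((-u : OF) : F)) / (δ + ι ((-u : OF) : F)) := by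
                rw [inv_div]
                push_cast
                rw [map_neg]
                ring_nf
              rwa [this] at hm
          · -- a - 1 nonunit: δ would have valuation < 1, contradiction
            have hva : OE.valuation (ι ((a : F) - 1)) < 1 := by
              have : ((a : F) - 1) = (((a - 1 : OF)) : F) := by push_cast; ring
              rw [this]
              exact hnonunit_val _ ha
            have hvb : OE.valuation (ι (b : F)) = 1 := hunit_val _ hbu
            have hvbδ : OE.valuation (ι (b : F) * δ) < 1 := by
              have heq : ι (b : F) * δ = (t - 1) - ι ((a : F) - 1) := by
                rw [ht1']; ring
              rw [heq]
              exact lt_of_le_of_lt (Valuation.map_sub _ _ _) (max_lt htv hva)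
            have hvδ : OE.valuation δ < 1 := by
              rw [Valuation.map_mul, hvb, one_mul] at hvbδ
              exact hvbδ
            have : OE.valuation (δ ^ 2) < 1 := by
              rw [pow_two, Valuation.map_mul]
              calc OE.valuation δ * OE.valuation δ ≤ OE.valuation δ * 1 :=
                    mul_le_mul_right hδle _
                _ = OE.valuation δ := mul_one _
                _ < 1 := hvδ
            rw [hδ, hunit_val _ hΔu] at this
            exact lt_irrefl _ this
        have hmem : b ∈ IsLocalRing.maximalIdeal OF := (IsLocalRing.mem_maximalIdeal _).mpr (mem_nonunits_iff.mpr hbnu)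
        rw [hcirr.maximalIdeal_eq, Ideal.mem_span_singleton] at hmem
        obtain ⟨b', hb'⟩ := hmem
        refine ⟨b', hb', ?_⟩
        have hvc : OE.valuation (ι (c : F)) < 1 := hnonunit_val _ hcirr.not_isUnit
        rw [Valuation.map_mul]
        calc OE.valuation (ι (c : F)) * OE.valuation δ
            ≤ OE.valuation (ι (c : F)) * 1 := mul_le_mul_right hδle _
          _ = OE.valuation (ι (c : F)) := mul_one _
          _ < 1 := hvc
      · -- ramified case
        have hδle : OE.valuation δ ≤ 1 := (OE.valuation_le_one_iff _).mpr hδOE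
        have hvΔ : OE.valuation (ι (Δ : F)) < 1 := hnonunit_val _ hΔirr.not_isUnit
        have hvδ : OE.valuation δ < 1 := by
          rcases lt_or_eq_of_le hδle with h | h
          · exact h
          · exfalso
            have : OE.valuation (δ ^ 2) = 1 := by
              rw [pow_two, Valuation.map_mul, h, one_mul]
            rw [hδ] at this
            rw [this] at hvΔ
            exact lt_irrefl _ hvΔ
        refine ⟨b, by rw [hc1, one_mul], ?_⟩
        rw [hc1]
        push_cast
        rw [map_one, one_mul]
        exact hvδ
    obtain ⟨b', hb', hcd⟩ := hkey
    -- a - 1 is a nonunit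
    have ha1 : ¬ IsUnit (a - 1) := by
      intro ha
      have hva : OE.valuation (ι ((a : F) - 1)) = 1 := by
        have : ((a : F) - 1) = (((a - 1 : OF)) : F) := by push_cast; ring
        rw [this]
        exact hunit_val _ ha
      have hvbδ : OE.valuation (ι (b : F) * δ) < 1 := by
        have heq : ι (b : F) * δ = ι (b' : F) * (ι (c : F) * δ) := by
          rw [hb']; push_cast; rw [map_mul]; ring
        rw [heq, Valuation.map_mul]
        calc OE.valuation (ι (b' : F)) * OE.valuation (ι (c : F) * δ)
            ≤ 1 * OE.valuation (ι (c : F) * δ) := mul_le_mul_left (hval_le _) _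
          _ = OE.valuation (ι (c : F) * δ) := one_mul _
          _ < 1 := hcd
      have : OE.valuation (ι ((a : F) - 1)) < 1 := by
        have heq : ι ((a : F) - 1) = (t - 1) - ι (b : F) * δ := by
          rw [ht1']; ring
        rw [heq]
        exact lt_of_le_of_lt (Valuation.map_sub _ _ _) (max_lt htv hvbδ)
      rw [hva] at this
      exact lt_irrefl _ this
    -- a + 1 is a unit
    have ha1' : IsUnit (a + 1) := by
      by_contra h
      have h1m : (a + 1 : OF) ∈ IsLocalRing.maximalIdeal OF :=
        (IsLocalRing.mem_maximalIdeal _).mpr (mem_nonunits_iff.mpr h)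
      have h2m : (a - 1 : OF) ∈ IsLocalRing.maximalIdeal OF :=
        (IsLocalRing.mem_maximalIdeal _).mpr (mem_nonunits_iff.mpr ha1)
      have h2mm : (2 : OF) ∈ IsLocalRing.maximalIdeal OF := by
        have h22 : (2 : OF) = (a + 1) - (a - 1) := by ring
        rw [h22]; exact Ideal.sub_mem _ h1m h2m
      exact (mem_nonunits_iff.mp ((IsLocalRing.mem_maximalIdeal _).mp h2mm)) h2unit
    obtain ⟨w, hw⟩ := ha1'.exists_right_inv
    set x : OF := b' * w with hxdef
    -- scalar identities
    have hab' : a ^ 2 - (c * b') ^ 2 * Δ = 1 := by rw [← hb']; exact hab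
    have hid1 : a - b * (c * x) * Δ = 1 := by
      rw [hxdef, hb']
      linear_combination w * hab' - (a - 1) * hw
    have hid2 : b - a * (c * x) = c * x := by
      rw [hxdef, hb']
      linear_combination (-(c * b')) * hw
    have hid1F : (a : F) - (b : F) * ((c : F) * (x : F)) * (Δ : F) = 1 := by
      exact_mod_cast congrArg (fun z : OF => (z : F)) hid1
    have hid2F : (b : F) - (a : F) * ((c : F) * (x : F)) = (c : F) * (x : F) := by
      exact_mod_cast congrArg (fun z : OF => (z : F)) hid2
    have hkeyeq : (1 : E) + ι (c : F) * δ * ι (x : F)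
        = t * (1 - ι (c : F) * δ * ι (x : F)) := by
      rw [ht]
      have e1 := congrArg ι hid1F
      simp only [map_sub, map_mul, map_one] at e1
      have e2 := congrArg ι hid2F
      simp only [map_sub, map_mul] at e2
      linear_combination (-e1) - δ * e2 + (ι (b:F) * ι (c:F) * ι (x:F)) * hδ
    refine ⟨x, ?_, ?_⟩
    · show (1 + ι (c : F) * δ * ι (x : F)) / τ (1 + ι (c : F) * δ * ι (x : F)) = t
      rw [hτk x, div_eq_iff (hτk0 x)]
      linear_combination hkeyeq
    · intro y hy
      rw [hτk y, div_eq_iff (hτk0 y)] at hy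
      have hx' : (1 : E) + ι (c : F) * δ * ι (x : F) = t * (1 - ι (c : F) * δ * ι (x : F)) :=
        hkeyeq
      have h1pt : (1 : E) + t ≠ 0 := by
        rw [ht]
        have : (1 : E) + (ι (a : F) + ι (b : F) * δ) = ι ((a : F) + 1) + ι (b : F) * δ := by
          rw [map_add, map_one]; ring
        rw [this]
        apply hne
        intro h
        have ha10 : (a + 1 : OF) = 0 := Subtype.coe_injective (by push_cast; linear_combination h)
        rw [ha10, zero_mul] at hw
        exact zero_ne_one hw
      have hprod : ι (c : F) * δ * (ι (y : F) - ι (x : F)) * (1 + t) = 0 := by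
        linear_combination hy - hx'
      have hxy : ι (y : F) - ι (x : F) = 0 := by
        rcases mul_eq_zero.mp hprod with h | h
        · rcases mul_eq_zero.mp h with h | h
          · rcases mul_eq_zero.mp h with h | h
            · exact absurd (hιinj (by simpa using h)) hc0
            · exact absurd h hδ0
          · exact h
        · exact absurd h h1pt
      apply Subtype.coe_injective
      exact hιinj (by rw [sub_eq_zero] at hxy; simpa using hxy)
  refine ⟨main, ?_⟩
  intro x hx
  have h1 : (1 : E) * τ 1 = 1 := by rw [map_one, mul_one]
  have h2 : OE.valuation ((1 : E) - 1) < 1 := by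
    rw [sub_self, Valuation.map_zero]
    exact zero_lt_one
  obtain ⟨x₀, hx₀, huniq⟩ := main 1 h1 h2
  have hz : (1 + ι (c : F) * δ * ι ((0 : OF) : F)) /
      τ (1 + ι (c : F) * δ * ι ((0 : OF) : F)) = 1 := by
    have : ι ((0 : OF) : F) = 0 := by push_cast; exact map_zero ι
    rw [this, mul_zero, add_zero, map_one, div_one]
  rw [huniq x hx, huniq 0 hz]
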